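/- arXiv:2505.04484 — 3 statements merged into one kernel-verified Lean document; each statement's English description precedes it below -/
import Mathlib

section
/- (Barber–Agakov bound) For discrete X and Z with p(x) > 0, and any conditional proposal q(x|z) > 0, the mutual information satisfies I(X;Z) ≥ E_{(x,z)∼p(x,z)}[log q(x|z)] + H(X), with the gap equal to E_{z∼p(z)}[KL(p(x|z) || q(x|z))] ≥ 0. -/
theorem barber_agakov_bound {α β : Type*} [Fintype α] [Fintype β]
    (p : α × β → ℝ) (hp : ∀ z, 0 ≤ p z) (hs : ∑ z, p z = 1)
    (hx : ∀ a, 0 < ∑ b, p (a, b))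
    (q : β → α → ℝ) (hq : ∀ b a, 0 ≤ q b a) (hqs : ∀ b, ∑ a, q b a = 1)
    (hqpos : ∀ a b, 0 < p (a, b) → 0 < q b a) :
    let I := ∑ a, ∑ b, p (a, b) *
        Real.log (p (a, b) / ((∑ b', p (a, b')) * (∑ a', p (a', b))))
    let H := -(∑ a, (∑ b, p (a, b)) * Real.log (∑ b, p (a, b)))
    let Elogq := ∑ a, ∑ b, p (a, b) * Real.log (q b a)
    let gap := ∑ b, ∑ a, p (a, b) *
        Real.log ((p (a, b) / (∑ a', p (a', b))) / q b a)
    Elogq + H ≤ I ∧ I - (Elogq + H) = gap ∧ 0 ≤ gap := by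
  intro I H Elogq gap
  have hple : ∀ a b, p (a, b) ≤ ∑ a', p (a', b) := fun a b =>
    Finset.single_le_sum (fun a' _ => hp (a', b)) (Finset.mem_univ a)
  -- key pointwise identity
  have keyterm : ∀ a b, p (a, b) *
      Real.log (p (a, b) / ((∑ b', p (a, b')) * (∑ a', p (a', b)))) =
      p (a, b) * Real.log ((p (a, b) / (∑ a', p (a', b))) / q b a)
        + p (a, b) * Real.log (q b a)
        - p (a, b) * Real.log (∑ b', p (a, b')) := by
    intro a b
    rcases eq_or_lt_of_le (hp (a, b)) with h0 | h0
    · simp [← h0]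
    · have hpzb : 0 < ∑ a', p (a', b) := lt_of_lt_of_le h0 (hple a b)
      have hq' : 0 < q b a := hqpos a b h0
      have hpxa := hx a
      rw [Real.log_div h0.ne' (by positivity),
          Real.log_mul hpxa.ne' hpzb.ne',
          Real.log_div (by positivity) hq'.ne',
          Real.log_div h0.ne' hpzb.ne']
      ring
  have hkey : I = gap + Elogq + H := by
    simp only [I, gap, Elogq, H]
    rw [Finset.sum_comm (f := fun b a => p (a, b) *
        Real.log ((p (a, b) / (∑ a', p (a', b))) / q b a))]
    rw [← Finset.sum_neg_distrib, ← Finset.sum_add_distrib,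
        ← Finset.sum_add_distrib]
    apply Finset.sum_congr rfl
    intro a _
    rw [show (∑ b, p (a, b)) * Real.log (∑ b, p (a, b)) =
        ∑ b, p (a, b) * Real.log (∑ b', p (a, b')) from
      by rw [← Finset.sum_mul]]
    rw [← Finset.sum_neg_distrib, ← Finset.sum_add_distrib,
        ← Finset.sum_add_distrib]
    apply Finset.sum_congr rfl
    intro b _
    have := keyterm a b
    linarith
  have hgap : 0 ≤ gap := by
    simp only [gap]
    apply Finset.sum_nonneg
    intro b _
    have hlb : ∀ a ∈ Finset.univ, p (a, b) - q b a * (∑ a', p (a', b)) ≤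
        p (a, b) * Real.log ((p (a, b) / (∑ a', p (a', b))) / q b a) := by
      intro a _
      rcases eq_or_lt_of_le (hp (a, b)) with h0 | h0
      · have : 0 ≤ q b a * (∑ a', p (a', b)) := by
          apply mul_nonneg (hq b a)
          exact Finset.sum_nonneg fun a' _ => hp (a', b)
        simp [← h0]; linarith
      · have hpzb : 0 < ∑ a', p (a', b) := lt_of_lt_of_le h0 (hple a b)
        have hq' : 0 < q b a := hqpos a b h0
        have hlog : Real.log ((∑ a', p (a', b)) * q b a / p (a, b)) ≤
            (∑ a', p (a', b)) * q b a / p (a, b) - 1 :=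
          Real.log_le_sub_one_of_pos (by positivity)
        have hinv : Real.log ((p (a, b) / (∑ a', p (a', b))) / q b a) =
            - Real.log ((∑ a', p (a', b)) * q b a / p (a, b)) := by
          rw [← Real.log_inv]
          congr 1
          field_simp
        rw [hinv]
        have h2 : 1 - (∑ a', p (a', b)) * q b a / p (a, b) ≤
            - Real.log ((∑ a', p (a', b)) * q b a / p (a, b)) := by linarith
        calc p (a, b) - q b a * (∑ a', p (a', b))
            = p (a, b) * (1 - (∑ a', p (a', b)) * q b a / p (a, b)) := by
              field_simp
          _ ≤ p (a, b) * (- Real.log ((∑ a', p (a', b)) * q b a / p (a, b))) :=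
              mul_le_mul_of_nonneg_left h2 (le_of_lt h0)
    calc (0:ℝ) = ∑ a, (p (a, b) - q b a * (∑ a', p (a', b))) := by
          rw [Finset.sum_sub_distrib, ← Finset.sum_mul, hqs b, one_mul, sub_self]
      _ ≤ _ := Finset.sum_le_sum hlb
  exact ⟨by linarith, by linarith, hgap⟩
end

section
/- If the variational family q(x|z) = p(x) e^{E(x,z)} / Z(z) with Z(z) = E_{x'∼p(x)}[e^{E(x',z)}] is substituted into the Barber–Agakov bound, the entropy term cancels and one obtains I(X;Z) ≥ E_{(x,z)∼p(x,z)}[E(x,z) - log Z(z)]. -/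
open Real Finset

/-- Gibbs' inequality: if `r` dominates `p` in total mass and is positive wherever
`p` is, then `∑ p i * log (r i / p i) ≤ 0`. -/
lemma gibbs_aux {ι : Type*} [Fintype ι] (p r : ι → ℝ)
    (hp : ∀ i, 0 ≤ p i) (hr : ∀ i, 0 ≤ r i) (hpr : ∀ i, 0 < p i → 0 < r i)
    (hsum : ∑ i, r i ≤ ∑ i, p i) :
    ∑ i, p i * Real.log (r i / p i) ≤ 0 := by
  have key : ∀ i, p i * Real.log (r i / p i) ≤ r i - p i := by
    intro i
    rcases eq_or_lt_of_le (hp i) with h | h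
    · simp [← h, hr i]
    · have hri := hpr i h
      have hdiv : 0 < r i / p i := div_pos hri h
      have := Real.log_le_sub_one_of_pos hdiv
      have h2 : p i * Real.log (r i / p i) ≤ p i * (r i / p i - 1) :=
        mul_le_mul_of_nonneg_left this (le_of_lt h)
      have h3 : p i * (r i / p i - 1) = r i - p i := by
        field_simp
      linarith
  calc ∑ i, p i * Real.log (r i / p i) ≤ ∑ i, (r i - p i) :=
        Finset.sum_le_sum fun i _ => key i
    _ = ∑ i, r i - ∑ i, p i := Finset.sum_sub_distrib _ _
    _ ≤ 0 := by linarith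

theorem energy_based_mi_lower_bound {α β : Type*} [Fintype α] [Fintype β]
    (p : α × β → ℝ) (hp : ∀ z, 0 ≤ p z) (hs : ∑ z, p z = 1)
    (hx : ∀ a, 0 < ∑ b, p (a, b))
    (E : α → β → ℝ) :
    (∑ a, ∑ b, p (a, b) *
        (E a b - Real.log (∑ a', (∑ b', p (a', b')) * Real.exp (E a' b))))
      ≤ ∑ a, ∑ b, p (a, b) *
          Real.log (p (a, b) / ((∑ b', p (a, b')) * (∑ a', p (a', b)))) := by
  set px : α → ℝ := fun a => ∑ b, p (a, b) with hpx
  set pz : β → ℝ := fun b => ∑ a, p (a, b) with hpz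
  set Z : β → ℝ := fun b => ∑ a', px a' * Real.exp (E a' b) with hZ
  have hne : Nonempty α := by
    rcases isEmpty_or_nonempty α with h | h
    · exfalso; rw [Finset.univ_eq_empty, Finset.sum_empty] at hs; norm_num at hs
    · exact h
  have hZpos : ∀ b, 0 < Z b := fun b =>
    Finset.sum_pos (fun a _ => mul_pos (hx a) (Real.exp_pos _)) Finset.univ_nonempty
  -- the variational joint
  set r : α × β → ℝ := fun q => px q.1 * Real.exp (E q.1 q.2) / Z q.2 * pz q.2 with hr
  have hrnn : ∀ q, 0 ≤ r q := by
    intro ⟨a, b⟩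
    have hpzb : 0 ≤ pz b := Finset.sum_nonneg fun a _ => hp _
    exact mul_nonneg (div_nonneg (mul_nonneg (hx a).le (Real.exp_pos _).le) (hZpos b).le) hpzb
  have hrpos : ∀ q : α × β, 0 < p q → 0 < r q := by
    intro ⟨a, b⟩ hpq
    have hpzb : 0 < pz b :=
      lt_of_lt_of_le hpq (Finset.single_le_sum (fun a' _ => hp (a', b)) (Finset.mem_univ a))
    exact mul_pos (div_pos (mul_pos (hx a) (Real.exp_pos _)) (hZpos b)) hpzb
  have hrsum : ∑ q : α × β, r q = 1 := by
    rw [Fintype.sum_prod_type_right]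
    have : ∀ b, ∑ a, r (a, b) = pz b := by
      intro b
      have : ∑ a, r (a, b) = (∑ a, px a * Real.exp (E a b)) / Z b * pz b := by
        simp only [hr]
        rw [Finset.sum_div, ← Finset.sum_mul]
      rw [this, show (∑ a, px a * Real.exp (E a b)) = Z b from rfl,
        div_self (hZpos b).ne', one_mul]
    calc ∑ b, ∑ a, r (a, b) = ∑ b, pz b := by simp [this]
      _ = 1 := by rw [hpz, ← Fintype.sum_prod_type_right]; exact hs
  have hgibbs : ∑ q : α × β, p q * Real.log (r q / p q) ≤ 0 :=
    gibbs_aux p r hp hrnn hrpos (by rw [hrsum, hs])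
  have hterm : ∀ q : α × β, p q * Real.log (r q / p q) =
      p q * (E q.1 q.2 - Real.log (Z q.2)) -
        p q * Real.log (p q / (px q.1 * pz q.2)) := by
    intro ⟨a, b⟩
    rcases eq_or_lt_of_le (hp (a, b)) with h | h
    · simp [← h]
    · have hpzb : 0 < pz b :=
        lt_of_lt_of_le h (Finset.single_le_sum (fun a' _ => hp (a', b)) (Finset.mem_univ a))
      have hxa := hx a
      have hrq : 0 < r (a, b) := hrpos _ h
      rw [Real.log_div hrq.ne' h.ne', Real.log_div h.ne' (mul_pos hxa hpzb).ne',
        hr]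
      simp only
      rw [Real.log_mul (div_pos (mul_pos hxa (Real.exp_pos _)) (hZpos b)).ne' hpzb.ne',
        Real.log_div (mul_pos hxa (Real.exp_pos _)).ne' (hZpos b).ne',
        Real.log_mul hxa.ne' (Real.exp_pos _).ne', Real.log_exp,
        Real.log_mul hxa.ne' hpzb.ne']
      ring
  have hsplit : ∑ q : α × β, p q * Real.log (r q / p q) =
      (∑ q : α × β, p q * (E q.1 q.2 - Real.log (Z q.2))) -
        ∑ q : α × β, p q * Real.log (p q / (px q.1 * pz q.2)) := by
    rw [← Finset.sum_sub_distrib]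
    exact Finset.sum_congr rfl fun q _ => hterm q
  have hfin : (∑ q : α × β, p q * (E q.1 q.2 - Real.log (Z q.2)))
      ≤ ∑ q : α × β, p q * Real.log (p q / (px q.1 * pz q.2)) := by
    rw [hsplit] at hgibbs; linarith
  calc (∑ a, ∑ b, p (a, b) *
        (E a b - Real.log (∑ a', (∑ b', p (a', b')) * Real.exp (E a' b))))
      = ∑ q : α × β, p q * (E q.1 q.2 - Real.log (Z q.2)) := by
        rw [Fintype.sum_prod_type]
    _ ≤ ∑ q : α × β, p q * Real.log (p q / (px q.1 * pz q.2)) := hfin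
    _ = ∑ a, ∑ b, p (a, b) *
          Real.log (p (a, b) / ((∑ b', p (a, b')) * (∑ a', p (a', b)))) := by
        rw [Fintype.sum_prod_type]
end

section
/- (Multi-sample/InfoNCE-style bound) Let (X₁,Z₁),...,(Xₙ,Zₙ) be i.i.d. pairs with discrete finite ranges, and E(x,z) any real-valued critic. Then I(X₁;Z₁) ≥ E[ (1/n) Σᵢ log( e^{E(Xᵢ,Zᵢ)} / ((1/n) Σⱼ e^{E(Xⱼ,Zᵢ)}) ) ]. -/
open Finset

private lemma sum_pi_prod' {ι κ : Type*} [Fintype ι] [DecidableEq ι] [Fintype κ]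
    (h : ι → κ → ℝ) :
    ∑ x : ι → κ, ∏ j, h j (x j) = ∏ j, ∑ b, h j b := by
  rw [Finset.prod_univ_sum, Fintype.piFinset_univ]

private lemma log_jensen' {ι : Type*} (t : Finset ι) (w v : ι → ℝ)
    (h0 : ∀ i ∈ t, 0 ≤ w i) (h1 : ∑ i ∈ t, w i = 1) (hv : ∀ i ∈ t, 0 < v i) :
    ∑ i ∈ t, w i * Real.log (v i) ≤ Real.log (∑ i ∈ t, w i * v i) := by
  have := strictConcaveOn_log_Ioi.concaveOn.le_map_sum h0 h1 (fun i hi => hv i hi)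
  simpa [smul_eq_mul] using this

private lemma marg_one' {α β : Type*} [Fintype α] [Fintype β] (p : α × β → ℝ)
    (hs : ∑ z, p z = 1) {n : ℕ} (i : Fin n) (F : α × β → ℝ) :
    ∑ s : Fin n → α × β, (∏ j, p (s j)) * F (s i) = ∑ w, p w * F w := by
  classical
  have h1 : ∀ s : Fin n → α × β,
      (∏ j, p (s j)) * F (s i) = ∏ j, (if j = i then p (s j) * F (s j) else p (s j)) := by
    intro s
    rw [← Finset.mul_prod_erase univ
          (fun j => if j = i then p (s j) * F (s j) else p (s j)) (mem_univ i),
        ← Finset.mul_prod_erase univ (fun j => p (s j)) (mem_univ i), if_pos rfl,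
        Finset.prod_congr rfl (fun j hj => if_neg (Finset.ne_of_mem_erase hj))]
    ring
  simp_rw [h1]
  rw [sum_pi_prod' (fun j w => if j = i then p w * F w else p w)]
  have h2 : ∀ j : Fin n, (∑ w, if j = i then p w * F w else p w)
      = if j = i then (∑ w, p w * F w) else 1 := by
    intro j
    by_cases h : j = i
    · simp [h]
    · simp [h, hs]
  rw [Finset.prod_congr rfl (fun j _ => h2 j)]
  simp

private lemma cprime_eq' {α β : Type*} [Fintype α] [Fintype β] (p : α × β → ℝ)
    {n : ℕ} (i : Fin n) (G : (Fin n → α) → β → ℝ) :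
    ∑ s : Fin n → α × β,
      ((∏ j ∈ univ.erase i, p (s j)) * ((∑ b, p ((s i).1, b)) * (∑ a, p (a, (s i).2)))) *
        G (fun j => (s j).1) ((s i).2)
    = ∑ x : Fin n → α, (∏ j, ∑ b, p (x j, b)) * ∑ b, (∑ a, p (a, b)) * G x b := by
  classical
  rw [← Equiv.sum_comp (Equiv.arrowProdEquivProdArrow (Fin n) (fun _ => α) (fun _ => β)).symm, Fintype.sum_prod_type]
  simp only [Equiv.arrowProdEquivProdArrow, Equiv.coe_fn_symm_mk]
  refine Finset.sum_congr rfl (fun x _ => ?_)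
  have h1 : ∀ z : Fin n → β,
      ((∏ j ∈ univ.erase i, p (x j, z j)) * ((∑ b, p (x i, b)) * (∑ a, p (a, z i)))) *
        G x (z i)
      = ∏ j, (if j = i then (∑ b, p (x i, b)) * ((∑ a, p (a, z j)) * G x (z j))
              else p (x j, z j)) := by
    intro z
    rw [← Finset.mul_prod_erase univ
          (fun j => if j = i then (∑ b, p (x i, b)) * ((∑ a, p (a, z j)) * G x (z j))
            else p (x j, z j)) (mem_univ i), if_pos rfl,
        Finset.prod_congr rfl (fun j hj => if_neg (Finset.ne_of_mem_erase hj))]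
    ring
  simp_rw [h1]
  rw [sum_pi_prod' (fun j b => if j = i then (∑ b', p (x i, b')) * ((∑ a, p (a, b)) * G x b)
        else p (x j, b))]
  have h2 : ∀ j : Fin n,
      (∑ b, if j = i then (∑ b', p (x i, b')) * ((∑ a, p (a, b)) * G x b) else p (x j, b))
      = if j = i then (∑ b', p (x i, b')) * (∑ b, (∑ a, p (a, b)) * G x b)
        else (∑ b, p (x j, b)) := by
    intro j
    by_cases h : j = i
    · simp [h, Finset.mul_sum]
    · simp [h]
  rw [Finset.prod_congr rfl (fun j _ => h2 j)]
  rw [← Finset.mul_prod_erase univ (fun j => if j = i then (∑ b', p (x i, b')) *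
        (∑ b, (∑ a, p (a, b)) * G x b) else (∑ b, p (x j, b))) (mem_univ i), if_pos rfl,
      Finset.prod_congr rfl (fun j hj => if_neg (Finset.ne_of_mem_erase hj)),
      ← Finset.mul_prod_erase univ (fun j => ∑ b, p (x j, b)) (mem_univ i)]
  ring

private lemma key_sum' {α β : Type*} [Fintype α] [Fintype β] (p : α × β → ℝ)
    (hp : ∀ z, 0 ≤ p z) (hs : ∑ z, p z = 1) {n : ℕ} (hn : 0 < n) (Ec : α → β → ℝ) :
    ∑ i : Fin n, ∑ x : Fin n → α, (∏ j, ∑ b, p (x j, b)) *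
      ∑ b, (∑ a, p (a, b)) *
        (Real.exp (Ec (x i) b) / ((1/(n:ℝ)) * ∑ j, Real.exp (Ec (x j) b)))
    = n := by
  classical
  have hN : (0:ℝ) < n := by exact_mod_cast hn
  rw [Finset.sum_comm]
  have hxin : ∀ x : Fin n → α,
      ∑ i : Fin n, (∏ j, ∑ b, p (x j, b)) *
        ∑ b, (∑ a, p (a, b)) *
          (Real.exp (Ec (x i) b) / ((1/(n:ℝ)) * ∑ j, Real.exp (Ec (x j) b)))
      = (∏ j, ∑ b, p (x j, b)) * (n:ℝ) := by
    intro x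
    rw [← Finset.mul_sum, Finset.sum_comm]
    congr 1
    have : ∀ b : β,
        ∑ i : Fin n, (∑ a, p (a, b)) *
          (Real.exp (Ec (x i) b) / ((1/(n:ℝ)) * ∑ j, Real.exp (Ec (x j) b)))
        = (∑ a, p (a, b)) * n := by
      intro b
      rw [← Finset.mul_sum]
      congr 1
      have hS : (0:ℝ) < ∑ j, Real.exp (Ec (x j) b) :=
        Finset.sum_pos (fun j _ => Real.exp_pos _) (univ_nonempty_iff.mpr ⟨⟨0, hn⟩⟩)
      rw [← Finset.sum_div]
      field_simp
    simp_rw [this]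
    rw [← Finset.sum_mul]
    have hZ : ∑ b, ∑ a, p (a, b) = 1 := by
      rw [← hs, Fintype.sum_prod_type, Finset.sum_comm]
    rw [hZ, one_mul]
  simp_rw [hxin]
  rw [← Finset.sum_mul]
  have hX1 : ∑ x : Fin n → α, ∏ j, ∑ b, p (x j, b) = 1 := by
    rw [sum_pi_prod' (fun _ a => ∑ b, p (a, b))]
    have : ∑ a, ∑ b, p (a, b) = 1 := by rw [← hs, Fintype.sum_prod_type]
    simp [this]
  rw [hX1, one_mul]


private lemma alg1' {pp e X Pr D : ℝ} (hp : pp ≠ 0) (hD : D ≠ 0) :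
    (pp * Pr) * (e * X / (D * pp)) = (Pr * X) * (e / D) := by
  field_simp

private lemma swap_lemma' {ι κ : Type*} [Fintype ι] [Fintype κ] (w : κ → ℝ) (N : ℝ)
    (L : ι → κ → ℝ) :
    ∑ s : κ, w s * (N * ∑ i : ι, L i s) = ∑ i : ι, N * ∑ s : κ, w s * L i s := by
  have h1 : ∀ s, w s * (N * ∑ i : ι, L i s) = ∑ i : ι, N * (w s * L i s) := by
    intro s
    rw [Finset.mul_sum, Finset.mul_sum]
    exact Finset.sum_congr rfl fun i _ => by ring
  rw [Finset.sum_congr rfl fun s _ => h1 s, Finset.sum_comm]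
  exact Finset.sum_congr rfl fun i _ => by rw [Finset.mul_sum]

private lemma dec_lemma {α β : Type*} [Fintype α] [Fintype β] (p : α × β → ℝ)
    (hp : ∀ z, 0 ≤ p z) (hs : ∑ z, p z = 1) {n : ℕ} (hn : 0 < n) (Ec : α → β → ℝ)
    (i : Fin n) :
    ∑ s : Fin n → α × β, (∏ j, p (s j)) *
        Real.log (Real.exp (Ec (s i).1 (s i).2) /
          ((1/(n:ℝ)) * ∑ j, Real.exp (Ec (s j).1 (s i).2)))
    = (∑ w : α × β, p w * Real.log (p w / ((∑ b, p (w.1, b)) * (∑ a, p (a, w.2)))))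
      + ∑ s : Fin n → α × β, (∏ j, p (s j)) *
          Real.log (Real.exp (Ec (s i).1 (s i).2) *
              ((∑ b, p ((s i).1, b)) * (∑ a, p (a, (s i).2))) /
            (((1/(n:ℝ)) * ∑ j, Real.exp (Ec (s j).1 (s i).2)) * p (s i))) := by
  classical
  rw [← marg_one' p hs i
    (fun w => Real.log (p w / ((∑ b, p (w.1, b)) * (∑ a, p (a, w.2))))),
    ← Finset.sum_add_distrib]
  refine Finset.sum_congr rfl fun s _ => ?_
  by_cases hPs : (∏ j, p (s j)) = 0
  · simp [hPs]
  · have h1 : ∀ j, 0 < p (s j) := fun j =>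
      lt_of_le_of_ne (hp _) (Ne.symm ((Finset.prod_ne_zero_iff.mp hPs) j (mem_univ j)))
    have h2 : 0 < ∑ b, p ((s i).1, b) := by
      refine lt_of_lt_of_le (h1 i) ?_
      rw [show p (s i) = p ((s i).1, (s i).2) by rw [Prod.mk.eta]]
      exact Finset.single_le_sum (fun b _ => hp _) (mem_univ _)
    have h3 : 0 < ∑ a, p (a, (s i).2) := by
      refine lt_of_lt_of_le (h1 i) ?_
      rw [show p (s i) = p ((s i).1, (s i).2) by rw [Prod.mk.eta]]
      exact Finset.single_le_sum (f := fun a => p (a, (s i).2)) (fun a _ => hp _)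
        (Finset.mem_univ (s i).1)
    have hN : (0:ℝ) < n := by exact_mod_cast hn
    have h4 : 0 < (1/(n:ℝ)) * ∑ j, Real.exp (Ec (s j).1 (s i).2) := by
      have hne : (univ : Finset (Fin n)).Nonempty := ⟨⟨0, hn⟩, mem_univ _⟩
      have : (0:ℝ) < ∑ j, Real.exp (Ec (s j).1 (s i).2) :=
        Finset.sum_pos (fun j _ => Real.exp_pos _) hne
      positivity
    have h5 := Real.exp_pos (Ec (s i).1 (s i).2)
    have h6 := h1 i
    rw [← mul_add]
    congr 1
    have e1 : Real.exp (Ec (s i).1 (s i).2) *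
          ((∑ b, p ((s i).1, b)) * (∑ a, p (a, (s i).2))) /
        (((1/(n:ℝ)) * ∑ j, Real.exp (Ec (s j).1 (s i).2)) * p (s i))
        = (Real.exp (Ec (s i).1 (s i).2) /
            ((1/(n:ℝ)) * ∑ j, Real.exp (Ec (s j).1 (s i).2))) *
          (((∑ b, p ((s i).1, b)) * (∑ a, p (a, (s i).2))) / p (s i)) :=
      (div_mul_div_comm _ _ _ _).symm
    rw [e1, Real.log_mul (by positivity) (by positivity),
      Real.log_div (by positivity) (by positivity),
      Real.log_div (by positivity) (by positivity),
      Real.log_div (by positivity) (by positivity)]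
    ring

private lemma csum_le {α β : Type*} [Fintype α] [Fintype β] (p : α × β → ℝ)
    (hp : ∀ z, 0 ≤ p z) {n : ℕ} (hn : 0 < n) (Ec : α → β → ℝ) (i : Fin n)
    (s : Fin n → α × β) :
    (∏ j, p (s j)) *
        (Real.exp (Ec (s i).1 (s i).2) *
            ((∑ b, p ((s i).1, b)) * (∑ a, p (a, (s i).2))) /
          (((1/(n:ℝ)) * ∑ j, Real.exp (Ec (s j).1 (s i).2)) * p (s i)))
    ≤ ((∏ j ∈ univ.erase i, p (s j)) * ((∑ b, p ((s i).1, b)) * (∑ a, p (a, (s i).2)))) *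
        (Real.exp (Ec (s i).1 (s i).2) /
          ((1/(n:ℝ)) * ∑ j, Real.exp (Ec (s j).1 (s i).2))) := by
  classical
  have hN : (0:ℝ) < n := by exact_mod_cast hn
  have h4 : 0 < (1/(n:ℝ)) * ∑ j, Real.exp (Ec (s j).1 (s i).2) := by
    have hne : (univ : Finset (Fin n)).Nonempty := ⟨⟨0, hn⟩, mem_univ _⟩
    have : (0:ℝ) < ∑ j, Real.exp (Ec (s j).1 (s i).2) :=
      Finset.sum_pos (fun j _ => Real.exp_pos _) hne
    positivity
  by_cases hpi : p (s i) = 0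
  · rw [show (∏ j, p (s j)) = 0 from Finset.prod_eq_zero (mem_univ i) hpi, zero_mul]
    refine mul_nonneg (mul_nonneg (Finset.prod_nonneg fun j _ => hp _)
      (mul_nonneg (Finset.sum_nonneg fun b _ => hp _)
        (Finset.sum_nonneg fun a _ => hp _))) ?_
    exact div_nonneg (le_of_lt (Real.exp_pos _)) (le_of_lt h4)
  · refine le_of_eq ?_
    rw [← Finset.mul_prod_erase univ (fun j => p (s j)) (mem_univ i)]
    exact alg1' hpi (ne_of_gt h4)

private lemma csum_eq {α β : Type*} [Fintype α] [Fintype β] (p : α × β → ℝ)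
    (hp : ∀ z, 0 ≤ p z) (hs : ∑ z, p z = 1) {n : ℕ} (hn : 0 < n) (Ec : α → β → ℝ) :
    ∑ i : Fin n, ∑ s : Fin n → α × β,
      ((∏ j ∈ univ.erase i, p (s j)) * ((∑ b, p ((s i).1, b)) * (∑ a, p (a, (s i).2)))) *
        (Real.exp (Ec (s i).1 (s i).2) /
          ((1/(n:ℝ)) * ∑ j, Real.exp (Ec (s j).1 (s i).2)))
    = n := by
  classical
  have step : ∀ i : Fin n, ∑ s : Fin n → α × β,
      ((∏ j ∈ univ.erase i, p (s j)) * ((∑ b, p ((s i).1, b)) * (∑ a, p (a, (s i).2)))) *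
        (Real.exp (Ec (s i).1 (s i).2) /
          ((1/(n:ℝ)) * ∑ j, Real.exp (Ec (s j).1 (s i).2)))
      = ∑ x : Fin n → α, (∏ j, ∑ b, p (x j, b)) *
          ∑ b, (∑ a, p (a, b)) *
            (Real.exp (Ec (x i) b) / ((1/(n:ℝ)) * ∑ j, Real.exp (Ec (x j) b))) := by
    intro i
    have h := cprime_eq' p i
      (fun x b => Real.exp (Ec (x i) b) / ((1/(n:ℝ)) * ∑ j, Real.exp (Ec (x j) b)))
    simpa using h
  simp_rw [step]
  exact key_sum' p hp hs hn Ec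

theorem infoNCE_lower_bound {α β : Type*} [Fintype α] [Fintype β]
    (p : α × β → ℝ) (hp : ∀ z, 0 ≤ p z) (hs : ∑ z, p z = 1)
    (n : ℕ) (hn : 0 < n) (Ec : α → β → ℝ) :
    (∑ s : Fin n → α × β, (∏ i, p (s i)) *
        ((1 / (n : ℝ)) * ∑ i, Real.log
          (Real.exp (Ec (s i).1 (s i).2) /
            ((1 / (n : ℝ)) * ∑ j, Real.exp (Ec (s j).1 (s i).2)))))
      ≤ ∑ a, ∑ b, p (a, b) *
          Real.log (p (a, b) / ((∑ b', p (a, b')) * (∑ a', p (a', b)))) := by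
  classical
  have hN : (0:ℝ) < n := by exact_mod_cast hn
  have hne : (univ : Finset (Fin n)).Nonempty := ⟨⟨0, hn⟩, mem_univ _⟩
  have hPnn : ∀ s : Fin n → α × β, (0:ℝ) ≤ ∏ j, p (s j) :=
    fun s => Finset.prod_nonneg fun j _ => hp _
  have hPsum : ∑ s : Fin n → α × β, ∏ j, p (s j) = 1 := by
    rw [sum_pi_prod' (fun _ w => p w)]
    simp [hs]
  -- support
  set T : Finset (Fin n → α × β) := univ.filter (fun s => (∏ j, p (s j)) ≠ 0) with hT
  have hTsum : ∑ s ∈ T, ∏ j, p (s j) = 1 := by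
    rw [hT, Finset.sum_filter_ne_zero]
    exact hPsum
  have hTmem : ∀ s ∈ T, (∏ j, p (s j)) ≠ 0 := fun s hsT => (Finset.mem_filter.mp hsT).2
  -- the bound B i ≤ log (c' i), 0 < c' i
  have key : ∀ i : Fin n,
      (∑ s : Fin n → α × β, (∏ j, p (s j)) *
        Real.log (Real.exp (Ec (s i).1 (s i).2) *
            ((∑ b, p ((s i).1, b)) * (∑ a, p (a, (s i).2))) /
          (((1/(n:ℝ)) * ∑ j, Real.exp (Ec (s j).1 (s i).2)) * p (s i))))
      ≤ Real.log (∑ s : Fin n → α × β,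
          ((∏ j ∈ univ.erase i, p (s j)) *
            ((∑ b, p ((s i).1, b)) * (∑ a, p (a, (s i).2)))) *
          (Real.exp (Ec (s i).1 (s i).2) /
            ((1/(n:ℝ)) * ∑ j, Real.exp (Ec (s j).1 (s i).2))))
      ∧ 0 < ∑ s : Fin n → α × β,
          ((∏ j ∈ univ.erase i, p (s j)) *
            ((∑ b, p ((s i).1, b)) * (∑ a, p (a, (s i).2)))) *
          (Real.exp (Ec (s i).1 (s i).2) /
            ((1/(n:ℝ)) * ∑ j, Real.exp (Ec (s j).1 (s i).2))) := by
    intro i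
    have hMpos : ∀ s : Fin n → α × β,
        0 < (1/(n:ℝ)) * ∑ j, Real.exp (Ec (s j).1 (s i).2) := by
      intro s
      have : (0:ℝ) < ∑ j, Real.exp (Ec (s j).1 (s i).2) :=
        Finset.sum_pos (fun j _ => Real.exp_pos _) hne
      positivity
    have hvnn : ∀ s : Fin n → α × β,
        0 ≤ Real.exp (Ec (s i).1 (s i).2) *
            ((∑ b, p ((s i).1, b)) * (∑ a, p (a, (s i).2))) /
          (((1/(n:ℝ)) * ∑ j, Real.exp (Ec (s j).1 (s i).2)) * p (s i)) := by
      intro s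
      apply div_nonneg
      · exact mul_nonneg (le_of_lt (Real.exp_pos _))
          (mul_nonneg (Finset.sum_nonneg fun b _ => hp _)
            (Finset.sum_nonneg fun a _ => hp _))
      · exact mul_nonneg (le_of_lt (hMpos s)) (hp _)
    have hvpos : ∀ s ∈ T,
        0 < Real.exp (Ec (s i).1 (s i).2) *
            ((∑ b, p ((s i).1, b)) * (∑ a, p (a, (s i).2))) /
          (((1/(n:ℝ)) * ∑ j, Real.exp (Ec (s j).1 (s i).2)) * p (s i)) := by
      intro s hsT
      have h1 : ∀ j, 0 < p (s j) := fun j =>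
        lt_of_le_of_ne (hp _) (Ne.symm ((Finset.prod_ne_zero_iff.mp (hTmem s hsT)) j (mem_univ j)))
      have h2 : 0 < ∑ b, p ((s i).1, b) := by
        refine lt_of_lt_of_le (h1 i) ?_
        rw [show p (s i) = p ((s i).1, (s i).2) by rw [Prod.mk.eta]]
        exact Finset.single_le_sum (fun b _ => hp _) (mem_univ _)
      have h3 : 0 < ∑ a, p (a, (s i).2) := by
        refine lt_of_lt_of_le (h1 i) ?_
        rw [show p (s i) = p ((s i).1, (s i).2) by rw [Prod.mk.eta]]
        exact Finset.single_le_sum (f := fun a => p (a, (s i).2)) (fun a _ => hp _)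
          (Finset.mem_univ (s i).1)
      have h4 := hMpos s
      have h5 := Real.exp_pos (Ec (s i).1 (s i).2)
      have h6 := h1 i
      positivity
    have jensen := log_jensen' T (fun s => ∏ j, p (s j))
      (fun s => Real.exp (Ec (s i).1 (s i).2) *
            ((∑ b, p ((s i).1, b)) * (∑ a, p (a, (s i).2))) /
          (((1/(n:ℝ)) * ∑ j, Real.exp (Ec (s j).1 (s i).2)) * p (s i)))
      (fun s _ => hPnn s) hTsum hvpos
    have hsub1 : ∑ s ∈ T, (∏ j, p (s j)) *
        Real.log (Real.exp (Ec (s i).1 (s i).2) *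
            ((∑ b, p ((s i).1, b)) * (∑ a, p (a, (s i).2))) /
          (((1/(n:ℝ)) * ∑ j, Real.exp (Ec (s j).1 (s i).2)) * p (s i)))
        = ∑ s : Fin n → α × β, (∏ j, p (s j)) *
        Real.log (Real.exp (Ec (s i).1 (s i).2) *
            ((∑ b, p ((s i).1, b)) * (∑ a, p (a, (s i).2))) /
          (((1/(n:ℝ)) * ∑ j, Real.exp (Ec (s j).1 (s i).2)) * p (s i))) := by
      refine Finset.sum_subset (Finset.filter_subset _ _) fun s _ hsT => ?_
      have : (∏ j, p (s j)) = 0 := by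
        by_contra h
        exact hsT (Finset.mem_filter.mpr ⟨mem_univ s, h⟩)
      rw [this, zero_mul]
    have hsub2 : ∑ s ∈ T, (∏ j, p (s j)) *
        (Real.exp (Ec (s i).1 (s i).2) *
            ((∑ b, p ((s i).1, b)) * (∑ a, p (a, (s i).2))) /
          (((1/(n:ℝ)) * ∑ j, Real.exp (Ec (s j).1 (s i).2)) * p (s i)))
        = ∑ s : Fin n → α × β, (∏ j, p (s j)) *
        (Real.exp (Ec (s i).1 (s i).2) *
            ((∑ b, p ((s i).1, b)) * (∑ a, p (a, (s i).2))) /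
          (((1/(n:ℝ)) * ∑ j, Real.exp (Ec (s j).1 (s i).2)) * p (s i))) := by
      refine Finset.sum_subset (Finset.filter_subset _ _) fun s _ hsT => ?_
      have : (∏ j, p (s j)) = 0 := by
        by_contra h
        exact hsT (Finset.mem_filter.mpr ⟨mem_univ s, h⟩)
      rw [this, zero_mul]
    have hposT : 0 < ∑ s ∈ T, (∏ j, p (s j)) *
        (Real.exp (Ec (s i).1 (s i).2) *
            ((∑ b, p ((s i).1, b)) * (∑ a, p (a, (s i).2))) /
          (((1/(n:ℝ)) * ∑ j, Real.exp (Ec (s j).1 (s i).2)) * p (s i))) := by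
      have hTne : T.Nonempty :=
        Finset.nonempty_of_sum_ne_zero (by rw [hTsum]; norm_num)
      rcases hTne with ⟨s0, hs0⟩
      refine Finset.sum_pos' (fun s _ => mul_nonneg (hPnn s) (hvnn s)) ⟨s0, hs0, ?_⟩
      exact mul_pos (lt_of_le_of_ne (hPnn s0) (Ne.symm (hTmem s0 hs0))) (hvpos s0 hs0)
    have hle : ∑ s : Fin n → α × β, (∏ j, p (s j)) *
        (Real.exp (Ec (s i).1 (s i).2) *
            ((∑ b, p ((s i).1, b)) * (∑ a, p (a, (s i).2))) /
          (((1/(n:ℝ)) * ∑ j, Real.exp (Ec (s j).1 (s i).2)) * p (s i)))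
        ≤ ∑ s : Fin n → α × β,
          ((∏ j ∈ univ.erase i, p (s j)) *
            ((∑ b, p ((s i).1, b)) * (∑ a, p (a, (s i).2)))) *
          (Real.exp (Ec (s i).1 (s i).2) /
            ((1/(n:ℝ)) * ∑ j, Real.exp (Ec (s j).1 (s i).2))) :=
      Finset.sum_le_sum fun s _ => csum_le p hp hn Ec i s
    have hpos_univ : 0 < ∑ s : Fin n → α × β, (∏ j, p (s j)) *
        (Real.exp (Ec (s i).1 (s i).2) *
            ((∑ b, p ((s i).1, b)) * (∑ a, p (a, (s i).2))) /
          (((1/(n:ℝ)) * ∑ j, Real.exp (Ec (s j).1 (s i).2)) * p (s i))) := by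
      rw [← hsub2]; exact hposT
    constructor
    · calc ∑ s : Fin n → α × β, (∏ j, p (s j)) *
          Real.log (Real.exp (Ec (s i).1 (s i).2) *
              ((∑ b, p ((s i).1, b)) * (∑ a, p (a, (s i).2))) /
            (((1/(n:ℝ)) * ∑ j, Real.exp (Ec (s j).1 (s i).2)) * p (s i)))
          = ∑ s ∈ T, (∏ j, p (s j)) *
          Real.log (Real.exp (Ec (s i).1 (s i).2) *
              ((∑ b, p ((s i).1, b)) * (∑ a, p (a, (s i).2))) /
            (((1/(n:ℝ)) * ∑ j, Real.exp (Ec (s j).1 (s i).2)) * p (s i))) := hsub1.symm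
        _ ≤ Real.log (∑ s ∈ T, (∏ j, p (s j)) *
            (Real.exp (Ec (s i).1 (s i).2) *
              ((∑ b, p ((s i).1, b)) * (∑ a, p (a, (s i).2))) /
            (((1/(n:ℝ)) * ∑ j, Real.exp (Ec (s j).1 (s i).2)) * p (s i)))) := jensen
        _ ≤ Real.log (∑ s : Fin n → α × β,
            ((∏ j ∈ univ.erase i, p (s j)) *
              ((∑ b, p ((s i).1, b)) * (∑ a, p (a, (s i).2)))) *
            (Real.exp (Ec (s i).1 (s i).2) /
              ((1/(n:ℝ)) * ∑ j, Real.exp (Ec (s j).1 (s i).2)))) := by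
          apply Real.log_le_log hposT
          rw [hsub2]
          exact hle
    · exact lt_of_lt_of_le hpos_univ hle
  -- sum of c' equals n
  have hc'sum := csum_eq p hp hs hn Ec
  -- second Jensen
  have hwsum : ∑ _i : Fin n, (1/(n:ℝ)) = 1 := by
    rw [Finset.sum_const, Finset.card_univ, Fintype.card_fin, nsmul_eq_mul]
    field_simp
  have jensen2 := log_jensen' (univ : Finset (Fin n)) (fun _ => 1/(n:ℝ))
    (fun i => ∑ s : Fin n → α × β,
        ((∏ j ∈ univ.erase i, p (s j)) *
          ((∑ b, p ((s i).1, b)) * (∑ a, p (a, (s i).2)))) *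
        (Real.exp (Ec (s i).1 (s i).2) /
          ((1/(n:ℝ)) * ∑ j, Real.exp (Ec (s j).1 (s i).2))))
    (fun i _ => by positivity) hwsum (fun i _ => (key i).2)
  have hone : ∑ i : Fin n, (1/(n:ℝ)) * (∑ s : Fin n → α × β,
        ((∏ j ∈ univ.erase i, p (s j)) *
          ((∑ b, p ((s i).1, b)) * (∑ a, p (a, (s i).2)))) *
        (Real.exp (Ec (s i).1 (s i).2) /
          ((1/(n:ℝ)) * ∑ j, Real.exp (Ec (s j).1 (s i).2)))) = 1 := by
    rw [← Finset.mul_sum, hc'sum]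
    field_simp
  rw [hone, Real.log_one] at jensen2
  -- assemble
  rw [show (∑ a, ∑ b, p (a, b) *
      Real.log (p (a, b) / ((∑ b', p (a, b')) * (∑ a', p (a', b)))))
      = ∑ w : α × β, p w * Real.log (p w / ((∑ b, p (w.1, b)) * (∑ a, p (a, w.2))))
      from by rw [Fintype.sum_prod_type]]
  rw [swap_lemma' (fun s : Fin n → α × β => ∏ j, p (s j)) (1/(n:ℝ))
    (fun i s => Real.log (Real.exp (Ec (s i).1 (s i).2) /
      ((1/(n:ℝ)) * ∑ j, Real.exp (Ec (s j).1 (s i).2))))]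
  rw [Finset.sum_congr rfl fun i (_ : i ∈ univ) => by rw [dec_lemma p hp hs hn Ec i]]
  have hsplit : ∑ i : Fin n, (1/(n:ℝ)) *
      ((∑ w : α × β, p w * Real.log (p w / ((∑ b, p (w.1, b)) * (∑ a, p (a, w.2)))))
        + ∑ s : Fin n → α × β, (∏ j, p (s j)) *
          Real.log (Real.exp (Ec (s i).1 (s i).2) *
              ((∑ b, p ((s i).1, b)) * (∑ a, p (a, (s i).2))) /
            (((1/(n:ℝ)) * ∑ j, Real.exp (Ec (s j).1 (s i).2)) * p (s i))))
      = (∑ w : α × β, p w * Real.log (p w / ((∑ b, p (w.1, b)) * (∑ a, p (a, w.2)))))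
        + ∑ i : Fin n, (1/(n:ℝ)) *
          ∑ s : Fin n → α × β, (∏ j, p (s j)) *
            Real.log (Real.exp (Ec (s i).1 (s i).2) *
                ((∑ b, p ((s i).1, b)) * (∑ a, p (a, (s i).2))) /
              (((1/(n:ℝ)) * ∑ j, Real.exp (Ec (s j).1 (s i).2)) * p (s i))) := by
    rw [Finset.sum_congr rfl fun i (_ : i ∈ univ) => mul_add (1/(n:ℝ)) _ _,
      Finset.sum_add_distrib, Finset.sum_const, Finset.card_univ, Fintype.card_fin,
      nsmul_eq_mul]
    congr 1
    field_simp
  rw [hsplit]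
  have hfinal : ∑ i : Fin n, (1/(n:ℝ)) *
      ∑ s : Fin n → α × β, (∏ j, p (s j)) *
        Real.log (Real.exp (Ec (s i).1 (s i).2) *
            ((∑ b, p ((s i).1, b)) * (∑ a, p (a, (s i).2))) /
          (((1/(n:ℝ)) * ∑ j, Real.exp (Ec (s j).1 (s i).2)) * p (s i))) ≤ 0 := by
    refine le_trans (Finset.sum_le_sum fun i _ => ?_) jensen2
    exact mul_le_mul_of_nonneg_left (key i).1 (by positivity)
  linarith
end
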